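/- arXiv:1503.02654 — 4 statements merged into one kernel-verified Lean document; each statement's English description precedes it below -/
import Mathlib

section
/- Any placement P of ρ replicas on leaves of a rooted tree that lexicominimizes the failure aggregate f⃗(P) must be balanced: for every internal node u with children 1,...,k, if child i is unfilled (ℓ_i - r_i > 0) then r_i ≥ r_j − 1 for all children j, where ℓ_i is the number of leaves under child i and r_i = |P ∩ leaves(child i)|. -/
open scoped Classical

/-- A rooted tree on a finite vertex set `V`, given by a parent function under which
every vertex reaches the root. -/
structure FailTree (V : Type*) [Fintype V] where
  root : V
  parent : V → V
  parent_root : parent root = root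
  reaches_root : ∀ v, ∃ n : ℕ, parent^[n] v = root

namespace FailTree

variable {V : Type*} [Fintype V]

/-- `T.Desc u v` : `u` is a descendant of `v` (every node is a descendant of itself). -/
def Desc (T : FailTree V) (u v : V) : Prop := ∃ n : ℕ, T.parent^[n] u = v

/-- A leaf is a node with no children. -/
def IsLeaf (T : FailTree V) (v : V) : Prop := ∀ u, T.parent u = v → u = v

noncomputable def leaves (T : FailTree V) : Finset V :=
  Finset.univ.filter fun v => T.IsLeaf v

/-- The failure number `f(v, P)` of node `v` under placement `P`:
the number of members of `P` that are descendants of `v`. -/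
noncomputable def fnum (T : FailTree V) (v : V) (P : Finset V) : ℕ :=
  (P.filter fun p => T.Desc p v).card

/-- The failure aggregate restricted to a set `S` of nodes: entry `i` counts the
nodes of `S` having failure number `i`. -/
noncomputable def faggOn (T : FailTree V) (S P : Finset V) : ℕ → ℕ :=
  fun i => (S.filter fun v => T.fnum v P = i).card

/-- The failure aggregate `f⃗(P)`: entry `i` counts the nodes with failure number `i`. -/
noncomputable def fagg (T : FailTree V) (P : Finset V) : ℕ → ℕ :=
  T.faggOn Finset.univ P

/-- The node set of the path from the root to `x`, i.e. all ancestors of `x`. -/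
noncomputable def pathTo (T : FailTree V) (x : V) : Finset V :=
  Finset.univ.filter fun v => T.Desc x v

/-- The number of leaves in the subtree rooted at `v`. -/
noncomputable def leafCount (T : FailTree V) (v : V) : ℕ :=
  (T.leaves.filter fun l => T.Desc l v).card

end FailTree

/-- Strict lexicographic comparison of failure aggregates; entries with higher index
(higher failure number) are more significant. -/
def AggLt (p q : ℕ → ℕ) : Prop := ∃ m, p m < q m ∧ ∀ i, m < i → p i = q i

/-- Lexicographic comparison (non-strict) of failure aggregates. -/
def AggLe (p q : ℕ → ℕ) : Prop := p = q ∨ AggLt p q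

namespace FailTree

variable {V : Type*} [Fintype V] (T : FailTree V)

lemma desc_refl (x : V) : T.Desc x x := ⟨0, rfl⟩

lemma desc_trans {x y z : V} (h1 : T.Desc x y) (h2 : T.Desc y z) : T.Desc x z := by
  obtain ⟨a, ha⟩ := h1; obtain ⟨b, hb⟩ := h2
  exact ⟨b + a, by rw [Function.iterate_add_apply, ha, hb]⟩

lemma root_of_cycle {c : V} {p : ℕ} (hp : 0 < p) (h : T.parent^[p] c = c) :
    c = T.root := by
  obtain ⟨n, hn⟩ := T.reaches_root c
  have hmul : ∀ t : ℕ, T.parent^[p * t] c = c := by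
    intro t
    induction t with
    | zero => simp
    | succ t ih => rw [Nat.mul_succ, Function.iterate_add_apply, h, ih]
  have hge : n ≤ p * n := Nat.le_mul_of_pos_left n hp
  have h1 : T.parent^[p * n - n + n] c = T.root := by
    rw [Function.iterate_add_apply, hn, Function.iterate_fixed T.parent_root]
  rw [Nat.sub_add_cancel hge, hmul n] at h1
  exact h1

lemma not_desc_up {c u : V} (hcu : T.parent c = u) (hne : c ≠ u) : ¬ T.Desc u c := by
  rintro ⟨k, hk⟩
  have hcyc : T.parent^[k + 1] c = c := by
    rw [Function.iterate_succ_apply, hcu, hk]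
  have hroot := T.root_of_cycle (Nat.succ_pos k) hcyc
  apply hne
  rw [hroot] at hcu ⊢
  rw [← hcu, T.parent_root]

lemma desc_split {x c w : V} (hxc : T.Desc x c) (hxw : T.Desc x w) :
    T.Desc w c ∨ T.Desc (T.parent c) w := by
  obtain ⟨m, hm⟩ := hxc
  obtain ⟨n, hn⟩ := hxw
  rcases le_or_gt n m with h | h
  · left
    refine ⟨m - n, ?_⟩
    rw [← hn, ← Function.iterate_add_apply, Nat.sub_add_cancel h, hm]
  · right
    refine ⟨n - m - 1, ?_⟩
    have hkey : n - m - 1 + 1 + m = n := by omega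
    calc T.parent^[n - m - 1] (T.parent c)
        = T.parent^[n - m - 1] (T.parent (T.parent^[m] x)) := by rw [hm]
      _ = T.parent^[n - m - 1 + 1 + m] x := by
            rw [Function.iterate_add_apply, Function.iterate_succ_apply]
      _ = w := by rw [hkey, hn]

lemma sibling_aux {v c1 c2 u : V} {a b : ℕ} (hab : a ≤ b)
    (h1 : T.parent^[a] v = c1) (h2 : T.parent^[b] v = c2)
    (hp1 : T.parent c1 = u) (hp2 : T.parent c2 = u) (hn2 : c2 ≠ u) : c1 = c2 := by
  have hb : T.parent^[b - a] c1 = c2 := by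
    rw [← h1, ← Function.iterate_add_apply, Nat.sub_add_cancel hab, h2]
  rcases Nat.eq_zero_or_pos (b - a) with h0 | h0
  · rw [h0] at hb; exact hb
  · exfalso
    apply T.not_desc_up hp2 hn2
    refine ⟨b - a - 1, ?_⟩
    have hss : b - a - 1 + 1 = b - a := by omega
    calc T.parent^[b - a - 1] u
        = T.parent^[b - a - 1] (T.parent c1) := by rw [hp1]
      _ = T.parent^[b - a - 1 + 1] c1 := (Function.iterate_succ_apply _ _ _).symm
      _ = T.parent^[b - a] c1 := by rw [hss]
      _ = c2 := hb

lemma sibling_unique {v c1 c2 u : V}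
    (hp1 : T.parent c1 = u) (hp2 : T.parent c2 = u)
    (hn1 : c1 ≠ u) (hn2 : c2 ≠ u)
    (d1 : T.Desc v c1) (d2 : T.Desc v c2) : c1 = c2 := by
  obtain ⟨a, ha⟩ := d1
  obtain ⟨b, hb⟩ := d2
  rcases le_total a b with h | h
  · exact T.sibling_aux h ha hb hp1 hp2 hn2
  · exact (T.sibling_aux h hb ha hp2 hp1 hn1).symm

lemma fnum_mono {v w : V} (h : T.Desc v w) (P : Finset V) :
    T.fnum v P ≤ T.fnum w P := by
  apply Finset.card_le_card
  intro p hp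
  simp only [Finset.mem_filter] at hp ⊢
  exact ⟨hp.1, T.desc_trans hp.2 h⟩

lemma fnum_swap {x y : V} {P : Finset V} (hx : x ∉ P) (hy : y ∈ P) (v : V) :
    T.fnum v (insert x (P.erase y)) =
      (T.fnum v P + (if T.Desc x v then 1 else 0)) - (if T.Desc y v then 1 else 0) := by
  classical
  unfold fnum
  rw [Finset.filter_insert, Finset.filter_erase]
  set F := P.filter fun p => T.Desc p v with hF
  have hxF : x ∉ F.erase y := fun h => hx ((Finset.mem_filter.mp (Finset.mem_of_mem_erase h)).1)
  split_ifs with hxv hyv hyv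
  · have hyF : y ∈ F := Finset.mem_filter.mpr ⟨hy, hyv⟩
    rw [Finset.card_insert_of_notMem hxF, Finset.card_erase_of_mem hyF]
    have : 1 ≤ F.card := Finset.card_pos.mpr ⟨y, hyF⟩
    omega
  · have hyF : y ∉ F := fun h => hyv (Finset.mem_filter.mp h).2
    rw [Finset.erase_eq_of_notMem hyF] at hxF ⊢
    rw [Finset.card_insert_of_notMem hxF]
    omega
  · have hyF : y ∈ F := Finset.mem_filter.mpr ⟨hy, hyv⟩
    rw [Finset.card_erase_of_mem hyF]
    omega
  · have hyF : y ∉ F := fun h => hyv (Finset.mem_filter.mp h).2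
    rw [Finset.erase_eq_of_notMem hyF]
    omega

end FailTree

/-- Theorem 2: any placement of `ρ` replicas on the leaves that lexicominimizes the
failure aggregate is balanced: at every node `u`, if child `ci` is unfilled then
`r_{cj} ≤ r_{ci} + 1` for every child `cj` of `u`. -/
theorem optimal_placement_balanced {V : Type*} [Fintype V] (T : FailTree V)
    (ρ : ℕ) (P : Finset V) (hPleaves : P ⊆ T.leaves) (hcard : P.card = ρ)
    (hopt : ∀ Q : Finset V, Q ⊆ T.leaves → Q.card = ρ → AggLe (T.fagg P) (T.fagg Q)) :
    ∀ u ci cj : V, T.parent ci = u → ci ≠ u → T.parent cj = u → cj ≠ u →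
      T.fnum ci P < T.leafCount ci → T.fnum cj P ≤ T.fnum ci P + 1 := by
  intro u ci cj hci hciu hcj hcju hunfilled
  by_contra hcon
  push_neg at hcon
  -- hcon : T.fnum ci P + 1 < T.fnum cj P
  have hcicj : ci ≠ cj := by
    intro h; rw [h] at hcon; omega
  -- find an empty leaf x under ci
  have hxex : ∃ x, x ∈ T.leaves ∧ T.Desc x ci ∧ x ∉ P := by
    by_contra hno
    push_neg at hno
    have hsub : T.leaves.filter (fun l => T.Desc l ci) ⊆ P.filter (fun p => T.Desc p ci) := by
      intro l hl
      rw [Finset.mem_filter] at hl ⊢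
      exact ⟨hno l hl.1 hl.2, hl.2⟩
    have := Finset.card_le_card hsub
    unfold FailTree.fnum FailTree.leafCount at hunfilled
    omega
  obtain ⟨x, hxleaf, hxci, hxP⟩ := hxex
  -- find a replica y under cj
  have hyex : (P.filter fun p => T.Desc p cj).Nonempty := by
    apply Finset.card_pos.mp
    have : 0 < T.fnum cj P := by omega
    unfold FailTree.fnum at this
    exact this
  obtain ⟨y, hy⟩ := hyex
  rw [Finset.mem_filter] at hy
  obtain ⟨hyP, hycj⟩ := hy
  -- the swapped placement
  set Q : Finset V := insert x (P.erase y) with hQ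
  have hQleaves : Q ⊆ T.leaves := by
    intro z hz
    rw [hQ, Finset.mem_insert] at hz
    rcases hz with h | h
    · rw [h]; exact hxleaf
    · exact hPleaves (Finset.mem_of_mem_erase h)
  have hQcard : Q.card = ρ := by
    have hxQ : x ∉ P.erase y := fun h => hxP (Finset.mem_of_mem_erase h)
    rw [hQ, Finset.card_insert_of_notMem hxQ, Finset.card_erase_of_mem hyP]
    have : 0 < P.card := Finset.card_pos.mpr ⟨y, hyP⟩
    omega
  -- descent facts
  have hciu' : T.Desc ci u := ⟨1, hci⟩
  have hcju' : T.Desc cj u := ⟨1, hcj⟩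
  have hxu : T.Desc x u := T.desc_trans hxci hciu'
  have hyu : T.Desc y u := T.desc_trans hycj hcju'
  -- if v gains (x but not y), then v is below ci
  have himp1 : ∀ v, T.Desc x v → ¬ T.Desc y v → T.fnum v P ≤ T.fnum ci P := by
    intro v hxv hyv
    have huv : ¬ T.Desc u v := fun h => hyv (T.desc_trans hyu h)
    rcases T.desc_split hxci hxv with h | h
    · exact T.fnum_mono h P
    · rw [hci] at h; exact absurd h huv
  -- if v loses (y but not x), then v is below cj
  have himp2 : ∀ v, T.Desc y v → ¬ T.Desc x v → T.fnum v P ≤ T.fnum cj P := by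
    intro v hyv hxv
    have huv : ¬ T.Desc u v := fun h => hxv (T.desc_trans hxu h)
    rcases T.desc_split hycj hyv with h | h
    · exact T.fnum_mono h P
    · rw [hcj] at h; exact absurd h huv
  have hfnumQ := T.fnum_swap hxP hyP
  -- higher entries of the aggregate agree
  have hgt : ∀ i, T.fnum cj P < i → T.fagg Q i = T.fagg P i := by
    intro i hi
    unfold FailTree.fagg FailTree.faggOn
    congr 1
    ext v
    simp only [Finset.mem_filter, Finset.mem_univ, true_and]
    rw [hfnumQ v]
    by_cases hxv : T.Desc x v <;> by_cases hyv : T.Desc y v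
    · simp only [if_pos hxv, if_pos hyv]; omega
    · have hb := himp1 v hxv hyv
      simp only [if_pos hxv, if_neg hyv]
      omega
    · have hb := himp2 v hyv hxv
      have h1 : 1 ≤ T.fnum v P :=
        Finset.card_pos.mpr ⟨y, Finset.mem_filter.mpr ⟨hyP, hyv⟩⟩
      simp only [if_neg hxv, if_pos hyv]
      omega
    · simp only [if_neg hxv, if_neg hyv]; omega
  -- the entry at s strictly decreases
  have hlts : T.fagg Q (T.fnum cj P) < T.fagg P (T.fnum cj P) := by
    unfold FailTree.fagg FailTree.faggOn
    apply Finset.card_lt_card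
    rw [Finset.ssubset_iff_of_subset]
    · refine ⟨cj, ?_, ?_⟩
      · simp only [Finset.mem_filter, Finset.mem_univ, true_and]
      · simp only [Finset.mem_filter, Finset.mem_univ, true_and]
        rw [hfnumQ cj]
        have hxcj : ¬ T.Desc x cj := by
          intro h
          exact hcicj (T.sibling_unique hci hcj hciu hcju hxci h)
        have h1 : 1 ≤ T.fnum cj P :=
          Finset.card_pos.mpr ⟨y, Finset.mem_filter.mpr ⟨hyP, hycj⟩⟩
        simp only [if_neg hxcj, if_pos hycj]
        omega
    · intro v hv
      simp only [Finset.mem_filter, Finset.mem_univ, true_and] at hv ⊢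
      rw [hfnumQ v] at hv
      by_cases hxv : T.Desc x v <;> by_cases hyv : T.Desc y v
      · simp only [if_pos hxv, if_pos hyv] at hv; omega
      · have hb := himp1 v hxv hyv
        simp only [if_pos hxv, if_neg hyv] at hv
        omega
      · have hb := himp2 v hyv hxv
        have h1 : 1 ≤ T.fnum v P :=
          Finset.card_pos.mpr ⟨y, Finset.mem_filter.mpr ⟨hyP, hyv⟩⟩
        simp only [if_neg hxv, if_pos hyv] at hv
        omega
      · simp only [if_neg hxv, if_neg hyv] at hv; omega
  -- contradiction with optimality
  rcases hopt Q hQleaves hQcard with heq | ⟨m, hm1, hm2⟩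
  · rw [heq] at hlts; omega
  · rcases lt_trichotomy m (T.fnum cj P) with h | h | h
    · have := hm2 _ h; omega
    · rw [h] at hm1; omega
    · have := hgt m h; omega
end

section
/- Path comparison implies placement comparison: let T be a rooted tree with root r, P a placement, and a, b two unoccupied leaves (a,b ∉ P). If f⃗(r⇝a, P) <_L f⃗(r⇝b, P), where r⇝x denotes the set of nodes on the path from r to x, then f⃗(P ∪ {a}) <_L f⃗(P ∪ {b}). -/
open scoped Classical

section Aux

variable {V : Type*} [Fintype V]

private lemma fnum_insert (T : FailTree V) (P : Finset V) (a v : V) (haP : a ∉ P) :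
    T.fnum v (insert a P) = T.fnum v P + (if T.Desc a v then 1 else 0) := by
  unfold FailTree.fnum
  rw [Finset.filter_insert]
  split_ifs with hd
  · rw [Finset.card_insert_of_notMem (fun h => haP (Finset.mem_filter.mp h).1)]
  · rfl

private lemma faggOn_path (T : FailTree V) (P : Finset V) (a : V) (j : ℕ) :
    T.faggOn (T.pathTo a) P j
      = (Finset.univ.filter (fun v => T.Desc a v ∧ T.fnum v P = j)).card := by
  unfold FailTree.faggOn FailTree.pathTo
  rw [Finset.filter_filter]

private lemma card_filter_or_split (p q : V → Prop)
    (hdisj : ∀ v, p v → q v → False) :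
    (Finset.univ.filter (fun v => p v ∨ q v)).card
      = (Finset.univ.filter p).card + (Finset.univ.filter q).card := by
  rw [Finset.filter_or]
  apply Finset.card_union_of_disjoint
  rw [Finset.disjoint_left]
  intro v hv hv'
  exact hdisj v (Finset.mem_filter.mp hv).2 (Finset.mem_filter.mp hv').2

private lemma key (T : FailTree V) (P : Finset V) (a : V) (haP : a ∉ P) (i : ℕ) :
    T.fagg (insert a P) (i+1) + T.faggOn (T.pathTo a) P (i+1)
      = T.fagg P (i+1) + T.faggOn (T.pathTo a) P i := by
  rw [faggOn_path, faggOn_path]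
  unfold FailTree.fagg FailTree.faggOn
  have h1 : (Finset.univ.filter (fun v => T.fnum v (insert a P) = i+1)).card
      = (Finset.univ.filter (fun v => T.Desc a v ∧ T.fnum v P = i)).card
        + (Finset.univ.filter (fun v => ¬ T.Desc a v ∧ T.fnum v P = i+1)).card := by
    have e : Finset.univ.filter (fun v => T.fnum v (insert a P) = i + 1)
        = Finset.univ.filter
          (fun v => (T.Desc a v ∧ T.fnum v P = i) ∨ (¬ T.Desc a v ∧ T.fnum v P = i + 1)) := by
      apply Finset.filter_congr
      intro v _
      rw [fnum_insert T P a v haP]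
      by_cases hd : T.Desc a v <;> simp [hd]
    rw [e, Finset.filter_or]
    apply Finset.card_union_of_disjoint
    rw [Finset.disjoint_left]
    intro v hv hv'
    exact (Finset.mem_filter.mp hv').2.1 (Finset.mem_filter.mp hv).2.1
  have h2 : (Finset.univ.filter (fun v => T.fnum v P = i+1)).card
      = (Finset.univ.filter (fun v => T.Desc a v ∧ T.fnum v P = i+1)).card
        + (Finset.univ.filter (fun v => ¬ T.Desc a v ∧ T.fnum v P = i+1)).card := by
    have e : Finset.univ.filter (fun v => T.fnum v P = i + 1)
        = Finset.univ.filter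
          (fun v => (T.Desc a v ∧ T.fnum v P = i + 1) ∨ (¬ T.Desc a v ∧ T.fnum v P = i + 1)) := by
      apply Finset.filter_congr
      intro v _
      by_cases hd : T.Desc a v <;> simp [hd]
    rw [e, Finset.filter_or]
    apply Finset.card_union_of_disjoint
    rw [Finset.disjoint_left]
    intro v hv hv'
    exact (Finset.mem_filter.mp hv').2.1 (Finset.mem_filter.mp hv).2.1
  omega

end Aux

/-- Lemma 2: if the failure aggregate along the root-to-`a` path is lexicographically
strictly smaller than along the root-to-`b` path, then adding `a` yields a
lexicographically strictly smaller failure aggregate than adding `b`. -/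
theorem path_lt_imp_placement_lt {V : Type*} [Fintype V] (T : FailTree V)
    (P : Finset V) (hP : P ⊆ T.leaves)
    (a b : V) (ha : a ∈ T.leaves) (hb : b ∈ T.leaves) (haP : a ∉ P) (hbP : b ∉ P)
    (h : AggLt (T.faggOn (T.pathTo a) P) (T.faggOn (T.pathTo b) P)) :
    AggLt (T.fagg (insert a P)) (T.fagg (insert b P)) := by
  obtain ⟨m, hm, hgt⟩ := h
  refine ⟨m + 1, ?_, ?_⟩
  · have ka := key T P a haP m
    have kb := key T P b hbP m
    have e := hgt (m + 1) (by omega)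
    omega
  · intro i hi
    obtain ⟨k, rfl⟩ : ∃ k, i = k + 1 := ⟨i - 1, by omega⟩
    have ka := key T P a haP k
    have kb := key T P b hbP k
    have e1 := hgt k (by omega)
    have e2 := hgt (k + 1) (by omega)
    omega
end

section
/- Path comparison is equivalent to placement comparison: with T, P, a, b as above, f⃗(r⇝a, P) ≤_L f⃗(r⇝b, P) if and only if f⃗(P ∪ {a}) ≤_L f⃗(P ∪ {b}). -/
open scoped Classical

namespace FailAux

variable {V : Type*} [Fintype V]

lemma fnum_insert (T : FailTree V) (P : Finset V) (a : V) (haP : a ∉ P) (v : V) :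
    T.fnum v (insert a P) = T.fnum v P + if T.Desc a v then 1 else 0 := by
  unfold FailTree.fnum
  rw [Finset.filter_insert]
  split
  · rw [Finset.card_insert_of_notMem (by simp [haP])]
  · simp

lemma faggOn_path (T : FailTree V) (a : V) (P : Finset V) (i : ℕ) :
    T.faggOn (T.pathTo a) P i
      = (Finset.univ.filter fun v => T.fnum v P = i ∧ T.Desc a v).card := by
  unfold FailTree.faggOn FailTree.pathTo
  rw [Finset.filter_filter]
  congr 1
  ext v
  simp [and_comm]

lemma fagg_split (T : FailTree V) (Q : Finset V) (a : V) (i : ℕ) :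
    T.fagg Q i
      = (Finset.univ.filter fun v => T.fnum v Q = i ∧ T.Desc a v).card
        + (Finset.univ.filter fun v => T.fnum v Q = i ∧ ¬ T.Desc a v).card := by
  unfold FailTree.fagg FailTree.faggOn
  rw [← Finset.card_filter_add_card_filter_not (p := fun v => T.Desc a v),
    Finset.filter_filter, Finset.filter_filter]

/-- The key counting identity: inserting `a` into the placement shifts the
aggregate on the path to `a` up by one index. -/
lemma fagg_insert_add (T : FailTree V) (P : Finset V) (a : V) (haP : a ∉ P) (i : ℕ) :
    T.fagg (insert a P) i + T.faggOn (T.pathTo a) P i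
      = (if i = 0 then 0 else T.faggOn (T.pathTo a) P (i - 1)) + T.fagg P i := by
  have hA : (Finset.univ.filter fun v => T.fnum v (insert a P) = i ∧ T.Desc a v).card
      = (if i = 0 then 0 else T.faggOn (T.pathTo a) P (i - 1)) := by
    rcases Nat.eq_zero_or_pos i with hi | hi
    · subst hi
      rw [if_pos rfl]
      rw [Finset.card_eq_zero, Finset.filter_eq_empty_iff]
      intro v _ hv
      obtain ⟨h1, h2⟩ := hv
      rw [fnum_insert T P a haP v, if_pos h2] at h1
      omega
    · rw [if_neg (by omega), faggOn_path]
      congr 1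
      apply Finset.filter_congr
      intro v _
      rw [fnum_insert T P a haP v]
      constructor
      · rintro ⟨h1, h2⟩
        rw [if_pos h2] at h1
        exact ⟨by omega, h2⟩
      · rintro ⟨h1, h2⟩
        rw [if_pos h2]
        exact ⟨by omega, h2⟩
  have hB : (Finset.univ.filter fun v => T.fnum v (insert a P) = i ∧ ¬ T.Desc a v).card
      = (Finset.univ.filter fun v => T.fnum v P = i ∧ ¬ T.Desc a v).card := by
    congr 1
    apply Finset.filter_congr
    intro v _
    rw [fnum_insert T P a haP v]
    constructor
    · rintro ⟨h1, h2⟩; rw [if_neg h2] at h1; exact ⟨by omega, h2⟩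
    · rintro ⟨h1, h2⟩; rw [if_neg h2]; exact ⟨by omega, h2⟩
  rw [fagg_split T (insert a P) a i, fagg_split T P a i, hA, hB, faggOn_path, faggOn_path]
  ring

lemma faggOn_path_eventually_zero (T : FailTree V) (a : V) (P : Finset V) (i : ℕ)
    (hi : P.card < i) : T.faggOn (T.pathTo a) P i = 0 := by
  unfold FailTree.faggOn
  rw [Finset.card_eq_zero, Finset.filter_eq_empty_iff]
  intro v _ hv
  have : T.fnum v P ≤ P.card := Finset.card_filter_le _ _
  omega

/-- Strict lexicographic comparison for integer-valued difference sequences. -/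
def ZLt (D : ℕ → ℤ) : Prop := ∃ m, D m < 0 ∧ ∀ i, m < i → D i = 0

lemma aggLe_iff_diff (p q : ℕ → ℕ) :
    AggLe p q ↔ ((∀ i, (p i : ℤ) - q i = 0) ∨ ZLt (fun i => (p i : ℤ) - q i)) := by
  unfold AggLe AggLt ZLt
  have heq : ∀ i, ((p i : ℤ) - q i = 0 ↔ p i = q i) := by
    intro i
    rw [sub_eq_zero]
    exact_mod_cast Iff.rfl
  have hlt : ∀ i, ((p i : ℤ) - q i < 0 ↔ p i < q i) := by
    intro i
    rw [sub_neg]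
    exact_mod_cast Iff.rfl
  constructor
  · rintro (h | ⟨m, h1, h2⟩)
    · subst h; left; intro i; ring
    · exact Or.inr ⟨m, (hlt m).mpr h1, fun i hi => (heq i).mpr (h2 i hi)⟩
  · rintro (h | ⟨m, h1, h2⟩)
    · left; funext i; exact (heq i).mp (h i)
    · exact Or.inr ⟨m, (hlt m).mp h1, fun i hi => (heq i).mp (h2 i hi)⟩

/-- The abstract core: lex comparison of `D` is equivalent to lex comparison of
its backwards difference `E i = D (i-1) - D i`, for eventually-zero `D`. -/
lemma zkey (D E : ℕ → ℤ) (hE : ∀ i, E i = (if i = 0 then 0 else D (i - 1)) - D i)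
    (N : ℕ) (hN : ∀ i, N ≤ i → D i = 0) :
    ((∀ i, D i = 0) ∨ ZLt D) ↔ ((∀ i, E i = 0) ∨ ZLt E) := by
  have step : ∀ i, E (i + 1) = D i - D (i + 1) := by
    intro i
    rw [hE (i + 1)]
    simp
  have const : ∀ m, (∀ i, m < i → E i = 0) → ∀ i, m ≤ i → D i = 0 := by
    intro m hm i hi
    have hk : ∀ k, D i = D (i + k) := by
      intro k
      induction k with
      | zero => rfl
      | succ k ih =>
        have h1 : E (i + k + 1) = 0 := hm _ (by omega)
        rw [step (i + k)] at h1
        show D i = D (i + k + 1)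
        rw [ih]
        omega
    have := hk N
    rw [hN (i + N) (by omega)] at this
    exact this
  constructor
  · rintro (h | ⟨m, h1, h2⟩)
    · left
      intro i
      rw [hE i, h i]
      rcases Nat.eq_zero_or_pos i with hi | hi
      · simp [hi]
      · rw [if_neg (by omega), h (i - 1)]; ring
    · right
      refine ⟨m + 1, ?_, fun i hi => ?_⟩
      · rw [step m, h2 (m + 1) (by omega)]
        omega
      · obtain ⟨j, rfl⟩ : ∃ j, i = j + 1 := ⟨i - 1, by omega⟩
        rw [step j, h2 j (by omega), h2 (j + 1) (by omega)]
        ring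
  · rintro (h | ⟨m, h1, h2⟩)
    · left
      intro i
      exact const 0 (fun j _ => h j) i (Nat.zero_le i)
    · right
      have hD0 : ∀ i, m ≤ i → D i = 0 := const m h2
      rcases Nat.eq_zero_or_pos m with hm | hm
      · exfalso
        subst hm
        rw [hE 0, if_pos rfl, hD0 0 le_rfl] at h1
        omega
      · refine ⟨m - 1, ?_, fun i hi => hD0 i (by omega)⟩
        rw [hE m, if_neg (by omega), hD0 m le_rfl] at h1
        omega

end FailAux

/-- Corollary 1: path comparison is equivalent to placement comparison. -/
theorem path_le_iff_placement_le {V : Type*} [Fintype V] (T : FailTree V)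
    (P : Finset V) (hP : P ⊆ T.leaves)
    (a b : V) (ha : a ∈ T.leaves) (hb : b ∈ T.leaves) (haP : a ∉ P) (hbP : b ∉ P) :
    AggLe (T.faggOn (T.pathTo a) P) (T.faggOn (T.pathTo b) P) ↔
      AggLe (T.fagg (insert a P)) (T.fagg (insert b P)) := by
  set ga := T.faggOn (T.pathTo a) P with hga
  set gb := T.faggOn (T.pathTo b) P with hgb
  set Fa := T.fagg (insert a P) with hFa
  set Fb := T.fagg (insert b P) with hFb
  set D : ℕ → ℤ := fun i => (ga i : ℤ) - gb i with hD
  set E : ℕ → ℤ := fun i => (Fa i : ℤ) - Fb i with hEdef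
  have ida : ∀ i, (Fa i : ℤ) = (if i = 0 then 0 else (ga (i - 1) : ℤ)) + T.fagg P i - ga i := by
    intro i
    have h := FailAux.fagg_insert_add T P a haP i
    rw [← hFa, ← hga] at h
    by_cases hi : i = 0
    · rw [if_pos hi] at h ⊢
      push_cast at h ⊢
      omega
    · rw [if_neg hi] at h ⊢
      push_cast at h ⊢
      omega
  have idb : ∀ i, (Fb i : ℤ) = (if i = 0 then 0 else (gb (i - 1) : ℤ)) + T.fagg P i - gb i := by
    intro i
    have h := FailAux.fagg_insert_add T P b hbP i
    rw [← hFb, ← hgb] at h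
    by_cases hi : i = 0
    · rw [if_pos hi] at h ⊢
      push_cast at h ⊢
      omega
    · rw [if_neg hi] at h ⊢
      push_cast at h ⊢
      omega
  have hE : ∀ i, E i = (if i = 0 then 0 else D (i - 1)) - D i := by
    intro i
    rw [hEdef]
    simp only [hD]
    rw [ida i, idb i]
    split <;> ring
  have hN : ∀ i, P.card + 1 ≤ i → D i = 0 := by
    intro i hi
    simp only [hD, hga, hgb]
    rw [FailAux.faggOn_path_eventually_zero T a P i (by omega),
      FailAux.faggOn_path_eventually_zero T b P i (by omega)]
    ring
  rw [FailAux.aggLe_iff_diff ga gb, FailAux.aggLe_iff_diff Fa Fb]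
  exact FailAux.zkey D E hE (P.card + 1) hN
end

section
/- If two placements of equal size induce the same multiset of failure numbers along the root-to-leaf paths they change, their failure aggregates are equal: for P ⊆ leaves and leaves a, b ∉ P, if f⃗(r⇝a,P) = f⃗(r⇝b,P) then f⃗(P ∪ {a}) = f⃗(P ∪ {b}). -/
open scoped Classical

lemma fnum_insert_aux {V : Type*} [Fintype V] (T : FailTree V) (P : Finset V) (x : V)
    (hx : x ∉ P) (v : V) :
    T.fnum v (insert x P) = T.fnum v P + (if T.Desc x v then 1 else 0) := by
  unfold FailTree.fnum
  rw [Finset.filter_insert]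
  split
  · rw [Finset.card_insert_of_notMem (fun hm => hx (Finset.mem_filter.mp hm).1)]
  · simp

lemma key_aux {V : Type*} [Fintype V] (T : FailTree V) (P : Finset V) (x : V)
    (hx : x ∉ P) (i : ℕ) :
    T.fagg (insert x P) i + T.faggOn (T.pathTo x) P i
      = T.fagg P i + ((T.pathTo x).filter (fun v => T.fnum v P + 1 = i)).card := by
  unfold FailTree.fagg FailTree.faggOn FailTree.pathTo
  rw [Finset.filter_filter, Finset.filter_filter]
  simp only [Finset.card_filter]
  rw [← Finset.sum_add_distrib, ← Finset.sum_add_distrib]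
  refine Finset.sum_congr rfl fun v _ => ?_
  rw [fnum_insert_aux T P x hx v]
  by_cases hd : T.Desc x v <;> simp [hd, add_comm]

/-- If the failure aggregates along the root-to-`a` and root-to-`b` paths coincide,
then the failure aggregates of `P ∪ {a}` and `P ∪ {b}` coincide. -/
theorem path_eq_imp_placement_eq {V : Type*} [Fintype V] (T : FailTree V)
    (P : Finset V) (hP : P ⊆ T.leaves)
    (a b : V) (ha : a ∈ T.leaves) (hb : b ∈ T.leaves) (haP : a ∉ P) (hbP : b ∉ P)
    (h : T.faggOn (T.pathTo a) P = T.faggOn (T.pathTo b) P) :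
    T.fagg (insert a P) = T.fagg (insert b P) := by
  funext i
  have ka := key_aux T P a haP i
  have kb := key_aux T P b hbP i
  have h1 : T.faggOn (T.pathTo a) P i = T.faggOn (T.pathTo b) P i := congrFun h i
  have h2 : ((T.pathTo a).filter (fun v => T.fnum v P + 1 = i)).card
      = ((T.pathTo b).filter (fun v => T.fnum v P + 1 = i)).card := by
    cases i with
    | zero => simp
    | succ j =>
        have ea : ∀ v, (T.fnum v P + 1 = j + 1) ↔ (T.fnum v P = j) := by
          intro v; omega
        simp only [ea]
        exact congrFun h j
  omega
end
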